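/- For every k ≥ 1, the disjoint union of k vertex-disjoint copies of the star K_{1,k} is not proportionally k-choosable. -/

import Mathlib

open Finset

/-- The multiplicity of a color `c` in a list assignment `L`: the number of
vertices whose list contains `c`. -/
def eta {V : Type*} [Fintype V] (L : V → Finset ℕ) (c : ℕ) : ℕ :=
  (Finset.univ.filter fun v => c ∈ L v).card

/-- `f` is a proportional `L`-coloring of `G` (with lists of size `k`): a proper
`L`-coloring in which each color `c` of the palette is used `⌊η(c)/k⌋` or `⌈η(c)/k⌉` times. -/
def IsProportionalColoring {V : Type*} [Fintype V] (G : SimpleGraph V) (k : ℕ)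
    (L : V → Finset ℕ) (f : V → ℕ) : Prop :=
  (∀ v, f v ∈ L v) ∧ (∀ u v, G.Adj u v → f u ≠ f v) ∧
  ∀ c, (∃ v, c ∈ L v) →
    (Finset.univ.filter fun v => f v = c).card = eta L c / k ∨
    (Finset.univ.filter fun v => f v = c).card = (eta L c + k - 1) / k

/-- `G` is proportionally `k`-choosable: every `k`-assignment admits a proportional coloring. -/
def ProportionallyChoosable {V : Type*} [Fintype V] (G : SimpleGraph V) (k : ℕ) : Prop :=
  ∀ L : V → Finset ℕ, (∀ v, (L v).card = k) → ∃ f : V → ℕ, IsProportionalColoring G k L f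

/-- The disjoint union of `k` copies of the star `K_{1,k}`: vertex `(i, none)` is
the center of the `i`-th star and `(i, some j)` its leaves. -/
def kStars (k : ℕ) : SimpleGraph (Fin k × Option (Fin k)) where
  Adj u v := u.1 = v.1 ∧ ((u.2 = none ∧ v.2 ≠ none) ∨ (u.2 ≠ none ∧ v.2 = none))
  symm := ⟨by intro u v h; tauto⟩
  loopless := ⟨by intro u h; tauto⟩

/-- Counting helper: if every element of `S` takes an `f`-value in `C` and each
color class has size at most `1`, then `|S| ≤ |C|`. -/
lemma count_bound {V : Type*} [Fintype V] [DecidableEq V] (f : V → ℕ) (S : Finset V)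
    (C : Finset ℕ) (h1 : ∀ v ∈ S, f v ∈ C)
    (h2 : ∀ c ∈ C, (Finset.univ.filter fun v => f v = c).card ≤ 1) :
    S.card ≤ C.card := by
  calc S.card ≤ (C.biUnion fun c => Finset.univ.filter fun v => f v = c).card := by
        apply Finset.card_le_card
        intro v hv
        simp only [Finset.mem_biUnion, Finset.mem_filter, Finset.mem_univ, true_and]
        exact ⟨f v, h1 v hv, rfl⟩
    _ ≤ ∑ c ∈ C, (Finset.univ.filter fun v => f v = c).card := Finset.card_biUnion_le
    _ ≤ ∑ c ∈ C, 1 := Finset.sum_le_sum h2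
    _ = C.card := by simp

theorem stmt_12 (k : ℕ) (hk : 1 ≤ k) : ¬ ProportionallyChoosable (kStars k) k := by
  intro hP
  have hkpos : 0 < k := hk
  set L : Fin k × Option (Fin k) → Finset ℕ := fun v =>
    match v.2 with
    | none => Finset.range k
    | some _ => insert 0 (Finset.Ioo ((v.1.1 + 1) * k) ((v.1.1 + 1) * k + k)) with hL
  have hLnone : ∀ (i : Fin k), L (i, none) = Finset.range k := fun i => rfl
  have hLsome : ∀ (i : Fin k) (j : Fin k),
      L (i, some j) = insert 0 (Finset.Ioo ((i.1 + 1) * k) ((i.1 + 1) * k + k)) := fun i j => rfl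
  have hLcard : ∀ v, (L v).card = k := by
    rintro ⟨i, _ | j⟩
    · rw [hLnone i]; exact Finset.card_range k
    · rw [hLsome, Finset.card_insert_of_notMem (by simp), Nat.card_Ioo]
      omega
  obtain ⟨i0⟩ : Nonempty (Fin k) := ⟨⟨0, hkpos⟩⟩
  obtain ⟨f, hf1, hf2, hf3⟩ := hP L hLcard
  -- small color classes for colors of small multiplicity
  have hA : ∀ c, (∃ v, c ∈ L v) → eta L c ≤ k →
      (Finset.univ.filter fun v => f v = c).card ≤ 1 := by
    intro c hex hle
    rcases hf3 c hex with h | h <;> rw [h]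
    · exact Nat.le_of_lt_succ (Nat.div_lt_of_lt_mul (by omega))
    · exact Nat.le_of_lt_succ (Nat.div_lt_of_lt_mul (by omega))
  -- multiplicity bounds
  have hB1 : ∀ c, 0 < c → c < k → eta L c ≤ k := by
    intro c hc0 hck
    have : (Finset.univ.filter fun v => c ∈ L v).card ≤ (Finset.univ : Finset (Fin k)).card := by
      apply Finset.card_le_card_of_injOn (fun v => v.1) (fun _ _ => Finset.mem_univ _)
      intro v hv w hw hvw
      simp only [Finset.coe_filter, Set.mem_setOf_eq, Finset.mem_univ, true_and] at hv hw
      have hv2 : v.2 = none := by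
        rcases v with ⟨i, _ | j⟩
        · rfl
        · rw [hLsome i j] at hv
          simp only [Finset.mem_insert, Finset.mem_Ioo] at hv
          have : k ≤ (i.1 + 1) * k := Nat.le_mul_of_pos_left k (by omega)
          omega
      have hw2 : w.2 = none := by
        rcases w with ⟨i, _ | j⟩
        · rfl
        · rw [hLsome i j] at hw
          simp only [Finset.mem_insert, Finset.mem_Ioo] at hw
          have : k ≤ (i.1 + 1) * k := Nat.le_mul_of_pos_left k (by omega)
          omega
      exact Prod.ext hvw (by rw [hv2, hw2])
    simpa [eta] using this
  have hB2 : ∀ (i : Fin k) (c : ℕ), (i.1 + 1) * k < c → c < (i.1 + 1) * k + k →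
      eta L c ≤ k := by
    intro i c hc1 hc2
    have : (Finset.univ.filter fun v => c ∈ L v).card ≤ (Finset.univ : Finset (Fin k)).card := by
      apply Finset.card_le_card_of_injOn (fun v => v.2.getD i0)
        (fun _ _ => Finset.mem_univ _)
      intro v hv w hw hvw
      simp only [Finset.coe_filter, Set.mem_setOf_eq, Finset.mem_univ, true_and] at hv hw
      have key : ∀ u : Fin k × Option (Fin k), c ∈ L u → ∃ j : Fin k, u = (i, some j) := by
        rintro ⟨a, _ | j⟩ hu
        · rw [hLnone a] at hu
          simp only [Finset.mem_range] at hu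
          have : k ≤ (i.1 + 1) * k := Nat.le_mul_of_pos_left k (by omega)
          exact absurd hu (by omega)
        · rw [hLsome a j] at hu
          simp only [Finset.mem_insert, Finset.mem_Ioo] at hu
          have hu' : (a.1 + 1) * k < c ∧ c < (a.1 + 1) * k + k := by omega
          have hai : a = i := by
            have h1 : (a.1 + 1) * k < (i.1 + 1) * k + k := by omega
            have h2 : (i.1 + 1) * k < (a.1 + 1) * k + k := by omega
            have h1' : (a.1 + 1) * k < (i.1 + 2) * k := by ring_nf; ring_nf at h1; omega
            have h2' : (i.1 + 1) * k < (a.1 + 2) * k := by ring_nf; ring_nf at h2; omega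
            have := Nat.lt_of_mul_lt_mul_right h1'
            have := Nat.lt_of_mul_lt_mul_right h2'
            exact Fin.ext (by omega)
          exact ⟨j, by rw [hai]⟩
      obtain ⟨j, hj⟩ := key v hv
      obtain ⟨j', hj'⟩ := key w hw
      rw [hj, hj'] at hvw ⊢
      simpa using hvw
    simpa [eta] using this
  -- cardinality of centers and of leaves of star i
  have hcenters : (Finset.univ.filter fun v : Fin k × Option (Fin k) => v.2 = none).card = k := by
    rw [show (Finset.univ.filter fun v : Fin k × Option (Fin k) => v.2 = none)
        = Finset.univ.image (fun i : Fin k => (i, none)) by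
      ext ⟨i, o⟩
      simp only [Finset.mem_filter, Finset.mem_univ, true_and, Finset.mem_image]
      cases o <;> simp]
    rw [Finset.card_image_of_injective _ (fun a b h => by simpa using h)]
    simp
  have hleaves : ∀ i : Fin k,
      (Finset.univ.filter fun v : Fin k × Option (Fin k) => v.1 = i ∧ v.2 ≠ none).card = k := by
    intro i
    rw [show (Finset.univ.filter fun v : Fin k × Option (Fin k) => v.1 = i ∧ v.2 ≠ none)
        = Finset.univ.image (fun j : Fin k => (i, some j)) by
      ext ⟨a, o⟩
      simp only [Finset.mem_filter, Finset.mem_univ, true_and, Finset.mem_image]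
      cases o <;> simp [eq_comm, and_comm]]
    rw [Finset.card_image_of_injective _ (fun a b h => by simpa using h)]
    simp
  -- some center is colored 0
  have hcenter0 : ∃ v : Fin k × Option (Fin k), v.2 = none ∧ f v = 0 := by
    by_contra hcon
    push_neg at hcon
    have hsub : (Finset.univ.filter fun v : Fin k × Option (Fin k) => v.2 = none) ⊆
        (Finset.univ.filter fun v : Fin k × Option (Fin k) => v.2 = none ∧ f v ≠ 0) := by
      intro v hv
      simp only [Finset.mem_filter, Finset.mem_univ, true_and] at hv ⊢
      exact ⟨hv, hcon v hv⟩
    have hbnd : (Finset.univ.filter fun v : Fin k × Option (Fin k) =>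
        v.2 = none ∧ f v ≠ 0).card ≤ (Finset.Ioo 0 k).card := by
      apply count_bound
      · intro v hv
        simp only [Finset.mem_filter, Finset.mem_univ, true_and] at hv
        have h1 := hf1 v
        rcases v with ⟨i, o⟩
        have ho : o = none := hv.1
        subst ho
        rw [hLnone i] at h1
        simp only [Finset.mem_range] at h1
        simp only [Finset.mem_Ioo]
        exact ⟨Nat.pos_of_ne_zero hv.2, h1⟩
      · intro c hc
        simp only [Finset.mem_Ioo] at hc
        exact hA c ⟨(i0, none), by rw [hLnone i0]; simpa using hc.2⟩ (hB1 c hc.1 hc.2)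
    have := Finset.card_le_card hsub
    rw [hcenters, Nat.card_Ioo] at *
    omega
  obtain ⟨v, hv2, hv0⟩ := hcenter0
  -- some leaf of star `v.1` is colored 0
  have hleaf0 : ∃ w : Fin k × Option (Fin k), w.1 = v.1 ∧ w.2 ≠ none ∧ f w = 0 := by
    by_contra hcon
    push_neg at hcon
    have hsub : (Finset.univ.filter fun w : Fin k × Option (Fin k) =>
        w.1 = v.1 ∧ w.2 ≠ none) ⊆
        (Finset.univ.filter fun w : Fin k × Option (Fin k) =>
          (w.1 = v.1 ∧ w.2 ≠ none) ∧ f w ≠ 0) := by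
      intro w hw
      simp only [Finset.mem_filter, Finset.mem_univ, true_and] at hw ⊢
      exact ⟨hw, hcon w hw.1 hw.2⟩
    have hbnd : (Finset.univ.filter fun w : Fin k × Option (Fin k) =>
        (w.1 = v.1 ∧ w.2 ≠ none) ∧ f w ≠ 0).card ≤
        (Finset.Ioo ((v.1.1 + 1) * k) ((v.1.1 + 1) * k + k)).card := by
      apply count_bound
      · intro w hw
        simp only [Finset.mem_filter, Finset.mem_univ, true_and] at hw
        have h1 := hf1 w
        rcases w with ⟨a, _ | j⟩
        · exact absurd rfl hw.1.2
        · rw [hLsome a j] at h1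
          have ha : a = v.1 := hw.1.1
          subst ha
          simp only [Finset.mem_insert] at h1
          rcases h1 with h1 | h1
          · exact absurd h1 hw.2
          · exact h1
      · intro c hc
        simp only [Finset.mem_Ioo] at hc
        refine hA c ⟨(v.1, some i0), ?_⟩ (hB2 v.1 c hc.1 hc.2)
        rw [hLsome v.1 i0]
        simp only [Finset.mem_insert, Finset.mem_Ioo]
        right; exact hc
    have := Finset.card_le_card hsub
    rw [hleaves v.1, Nat.card_Ioo] at *
    omega
  obtain ⟨w, hw1, hw2, hw0⟩ := hleaf0
  exact hf2 v w ⟨hw1.symm, Or.inl ⟨hv2, hw2⟩⟩ (by rw [hv0, hw0])
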